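/- Let M₁, M₂ be C¹ functions on an interval and W(z) = M₁'(z)M₂(z) - M₂'(z)M₁(z). If M₁, M₂ satisfy κ M_i'' = [γ - μ_i + s²/(μ_i - (ν+2)/η_s(z)^{ν+3})] M_i (i = 1,2) with a continuous positive function η_s, then W'(z) = ((μ₂-μ₁)/κ) M₁(z)M₂(z) Φ(z), where Φ(z) = 1 + s² η_s(z)^{2(ν+3)} / ([(ν+2) - μ₁ η_s(z)^{ν+3}][(ν+2) - μ₂ η_s(z)^{ν+3}]). -/

import Mathlib

/-- Derivative of the Wronskian of two solutions of the generalized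
eigenvalue problem. -/
theorem stmt_8 (ν γ κ s : ℝ) (hν : ν > -1) (hκ : κ > 0)
    (ηs : ℝ → ℝ) (hηs : Continuous ηs) (hηspos : ∀ z, ηs z > 0)
    (μ₁ μ₂ : ℝ)
    (hμ₁ : ∀ z, μ₁ * (ηs z) ^ (ν + 3) ≠ ν + 2)
    (hμ₂ : ∀ z, μ₂ * (ηs z) ^ (ν + 3) ≠ ν + 2)
    (M₁ M₂ : ℝ → ℝ) (hM₁ : ContDiff ℝ 2 M₁) (hM₂ : ContDiff ℝ 2 M₂)
    (heq₁ : ∀ z, κ * deriv (deriv M₁) z =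
      (γ - μ₁ + s ^ 2 / (μ₁ - (ν + 2) / (ηs z) ^ (ν + 3))) * M₁ z)
    (heq₂ : ∀ z, κ * deriv (deriv M₂) z =
      (γ - μ₂ + s ^ 2 / (μ₂ - (ν + 2) / (ηs z) ^ (ν + 3))) * M₂ z) :
    ∀ z, deriv (fun x => deriv M₁ x * M₂ x - deriv M₂ x * M₁ x) z =
      (μ₂ - μ₁) / κ * (M₁ z * M₂ z *
        (1 + s ^ 2 * (ηs z) ^ (2 * (ν + 3)) /
          (((ν + 2) - μ₁ * (ηs z) ^ (ν + 3)) * ((ν + 2) - μ₂ * (ηs z) ^ (ν + 3))))) := by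
  intro z
  have h1 : Differentiable ℝ M₁ := hM₁.differentiable (by norm_num)
  have h2 : Differentiable ℝ M₂ := hM₂.differentiable (by norm_num)
  have hd1 : Differentiable ℝ (deriv M₁) :=
    ((contDiff_succ_iff_deriv.mp (show ContDiff ℝ ((1:ℕ∞) + 1) M₁ by exact_mod_cast hM₁)).2.2).differentiable
      (by norm_num)
  have hd2 : Differentiable ℝ (deriv M₂) :=
    ((contDiff_succ_iff_deriv.mp (show ContDiff ℝ ((1:ℕ∞) + 1) M₂ by exact_mod_cast hM₂)).2.2).differentiable
      (by norm_num)
  have hW : HasDerivAt (fun x => deriv M₁ x * M₂ x - deriv M₂ x * M₁ x)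
      ((deriv (deriv M₁) z * M₂ z + deriv M₁ z * deriv M₂ z) -
        (deriv (deriv M₂) z * M₁ z + deriv M₂ z * deriv M₁ z)) z :=
    (((hd1 z).hasDerivAt.mul (h2 z).hasDerivAt).sub
      ((hd2 z).hasDerivAt.mul (h1 z).hasDerivAt))
  rw [hW.deriv]
  set x := ηs z with hx
  have hxpos : (0:ℝ) < x := hηspos z
  have hh : (0:ℝ) < x ^ (ν + 3) := Real.rpow_pos_of_pos hxpos _
  have hhne : x ^ (ν + 3) ≠ 0 := ne_of_gt hh
  have h2eq : x ^ (2 * (ν + 3)) = (x ^ (ν + 3)) ^ (2:ℕ) := by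
    rw [show (2:ℝ) * (ν + 3) = (ν + 3) * 2 by ring, Real.rpow_mul hxpos.le]
    norm_num
  have d1 : μ₁ * x ^ (ν + 3) - (ν + 2) ≠ 0 := sub_ne_zero.mpr (hμ₁ z)
  have d2 : μ₂ * x ^ (ν + 3) - (ν + 2) ≠ 0 := sub_ne_zero.mpr (hμ₂ z)
  have hne1 : (ν + 2) - μ₁ * x ^ (ν + 3) ≠ 0 := by
    intro h; exact hμ₁ z (by linarith)
  have hne2 : (ν + 2) - μ₂ * x ^ (ν + 3) ≠ 0 := by
    intro h; exact hμ₂ z (by linarith)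
  have r1 : μ₁ - (ν + 2) / x ^ (ν + 3) = (μ₁ * x ^ (ν + 3) - (ν + 2)) / x ^ (ν + 3) := by
    field_simp
  have r2 : μ₂ - (ν + 2) / x ^ (ν + 3) = (μ₂ * x ^ (ν + 3) - (ν + 2)) / x ^ (ν + 3) := by
    field_simp
  have e1 : deriv (deriv M₁) z =
      (γ - μ₁ + s ^ 2 * x ^ (ν + 3) / (μ₁ * x ^ (ν + 3) - (ν + 2))) * M₁ z / κ := by
    rw [eq_div_iff (ne_of_gt hκ)]
    have := heq₁ z
    rw [← hx, r1, div_div_eq_mul_div] at this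
    linarith
  have e2 : deriv (deriv M₂) z =
      (γ - μ₂ + s ^ 2 * x ^ (ν + 3) / (μ₂ * x ^ (ν + 3) - (ν + 2))) * M₂ z / κ := by
    rw [eq_div_iff (ne_of_gt hκ)]
    have := heq₂ z
    rw [← hx, r2, div_div_eq_mul_div] at this
    linarith
  rw [e1, e2, h2eq]
  rw [show ν + 2 - μ₁ * x ^ (ν + 3) = -(μ₁ * x ^ (ν + 3) - (ν + 2)) by ring,
    show ν + 2 - μ₂ * x ^ (ν + 3) = -(μ₂ * x ^ (ν + 3) - (ν + 2)) by ring]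
  simp only [div_eq_mul_inv, neg_mul_neg, mul_inv]
  linear_combination (M₁ z * M₂ z * s ^ 2 * x ^ (ν + 3) * κ⁻¹) *
    ((μ₂ * x ^ (ν + 3) - (ν + 2))⁻¹ * mul_inv_cancel₀ d1 - (μ₁ * x ^ (ν + 3) - (ν + 2))⁻¹ * mul_inv_cancel₀ d2)
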